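/- If a graph G contains an induced matching with k edges, then G has at least 2^k maximal independent sets. -/

import Mathlib

open Set

universe u

variable {V : Type u}

/-- A set of vertices is independent if no two of its members are adjacent. -/
def IndepSet (G : SimpleGraph V) (I : Set V) : Prop :=
  I.Pairwise (fun u v => ¬ G.Adj u v)

/-- A maximal independent set of a graph. -/
def MaxIndep (G : SimpleGraph V) (I : Set V) : Prop :=
  IndepSet G I ∧ ∀ J : Set V, IndepSet G J → I ⊆ J → J = I

/-- An induced matching with `k` edges `a i b i`: the `2k` endpoints are pairwise
distinct and the only edges of `G` between them are the matching edges themselves. -/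
def IsInducedMatching (G : SimpleGraph V) (k : ℕ) (a b : Fin k → V) : Prop :=
  (∀ i, G.Adj (a i) (b i)) ∧
  ∀ i j, i ≠ j → ∀ x ∈ ({a i, b i} : Set V), ∀ y ∈ ({a j, b j} : Set V),
    x ≠ y ∧ ¬ G.Adj x y

/-- `μ_G(S)`: maximum size of an induced matching each of whose edges meets `S`. -/
noncomputable def muS (G : SimpleGraph V) (S : Set V) : ℕ :=
  sSup {k | ∃ a b : Fin k → V, IsInducedMatching G k a b ∧ ∀ i, a i ∈ S ∨ b i ∈ S}

/-- `α_G(S)`: maximum size of an independent set contained in `S`. -/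
noncomputable def alphaS (G : SimpleGraph V) (S : Set V) : ℕ :=
  sSup {n | ∃ I : Set V, I ⊆ S ∧ IndepSet G I ∧ I.ncard = n}

/-- The trace (restriction) of a set family on `S`. -/
def trace (S : Set V) (F : Set (Set V)) : Set (Set V) :=
  (fun I => I ∩ S) '' F

/-- A hypergraph (given by its edge set) is a clutter if no edge properly contains another. -/
def IsClutter (E : Set (Set V)) : Prop := ∀ h ∈ E, ∀ f ∈ E, f ⊆ h → f = h

/-- A transversal of a hypergraph: a set meeting every edge. -/
def IsTransversal (E : Set (Set V)) (T : Set V) : Prop := ∀ h ∈ E, (T ∩ h).Nonempty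

/-- The blocker: the clutter of all inclusion-wise minimal transversals. -/
def blocker (E : Set (Set V)) : Set (Set V) :=
  {T | IsTransversal E T ∧ ∀ T' ⊆ T, IsTransversal E T' → T' = T}

/-- Inclusion-wise minimal members of a family of sets. -/
def minEdges (F : Set (Set V)) : Set (Set V) := {h ∈ F | ∀ f ∈ F, f ⊆ h → f = h}

/-- Deletion of a vertex from a clutter. -/
def del (E : Set (Set V)) (v : V) : Set (Set V) := {h ∈ E | v ∉ h}

/-- Contraction of a vertex in a clutter. -/
def contr (E : Set (Set V)) (v : V) : Set (Set V) :=
  minEdges ((fun h => h \ {v}) '' E)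

/-- Contraction of a set of vertices in a clutter. -/
def contrSet (E : Set (Set V)) (B : Set V) : Set (Set V) :=
  minEdges ((fun h => h \ B) '' E)

/-- Join of two clutters: minimal elements of the union of the edge sets. -/
def cJoin (E F : Set (Set V)) : Set (Set V) := minEdges (E ∪ F)

/-- Meet of two clutters: minimal elements of pairwise unions of edges. -/
def cMeet (E F : Set (Set V)) : Set (Set V) :=
  minEdges {s | ∃ h ∈ E, ∃ f ∈ F, s = h ∪ f}

/-- `H ∘ (h, u, v) = H[u; h∖{u}] ∨ H[v; h∖{v}]`. -/
def cOp (E : Set (Set V)) (h : Set V) (u v : V) : Set (Set V) :=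
  cJoin (contrSet (del E u) (h \ {u})) (contrSet (del E v) (h \ {v}))

/-- An independent (stable) set of a hypergraph: contains no edge. -/
def HIndep (E : Set (Set V)) (I : Set V) : Prop := ∀ h ∈ E, ¬ h ⊆ I

/-- A maximal independent set of a hypergraph. -/
def MaxHIndep (E : Set (Set V)) (I : Set V) : Prop :=
  HIndep E I ∧ ∀ J : Set V, HIndep E J → I ⊆ J → J = I

/-- The Gaifman graph of a hypergraph. -/
def gaif (E : Set (Set V)) : SimpleGraph V :=
  SimpleGraph.fromRel (fun u v => ∃ h ∈ E, u ∈ h ∧ v ∈ h)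

/-- A well-behaved hypergraph width measure. -/
structure WellBehaved (lam : Set (Set V) → Set V → ℚ) : Prop where
  one : ∀ (E : Set (Set V)) (x : V), 1 ≤ lam E {x}
  subadd : ∀ (E : Set (Set V)) (S T : Set V), lam E (S ∪ T) ≤ lam E S + lam E T
  add : ∀ (E : Set (Set V)) (S T : Set V), Disjoint S T →
    (∀ s ∈ S, ∀ t ∈ T, ¬ (gaif E).Adj s t) → lam E (S ∪ T) = lam E S + lam E T
  mono : ∀ (E F : Set (Set V)) (S T : Set V), E ⊆ F → S ⊆ T → lam F S ≤ lam E T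

/-- `(T, bag)` is a tree decomposition of `G`. -/
structure IsTreeDecomp {ι : Type} (G : SimpleGraph V) (T : SimpleGraph ι)
    (bag : ι → Set V) : Prop where
  conn : T.Connected
  acyclic : T.IsAcyclic
  edge_cover : ∀ ⦃u v : V⦄, G.Adj u v → ∃ t, u ∈ bag t ∧ v ∈ bag t
  vert_conn : ∀ v : V, (T.induce {t | v ∈ bag t}).Connected

/-- The `λ`-treewidth of `G` for a width measure `lam` on bags. -/
noncomputable def lamTW (G : SimpleGraph V) (lam : Set V → ℕ) : ℕ :=
  sInf {k | ∃ (ι : Type) (T : SimpleGraph ι) (bag : ι → Set V),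
    IsTreeDecomp G T bag ∧ ∀ t, lam (bag t) ≤ k}

/-- `M(G)`: attach a pendant vertex to every vertex of `G`. -/
def pend (G : SimpleGraph V) : SimpleGraph (V ⊕ V) :=
  SimpleGraph.fromRel (fun x y =>
    match x, y with
    | Sum.inl u, Sum.inl v => G.Adj u v
    | Sum.inl u, Sum.inr v => u = v
    | _, _ => False)

/-- `L²(G)`: vertices are the edges of `G`; two distinct edges are adjacent iff
their union induces a connected subgraph. -/
def L2 (G : SimpleGraph V) : SimpleGraph G.edgeSet :=
  SimpleGraph.fromRel (fun e f =>
    ∃ x ∈ (e : Sym2 V), ∃ y ∈ (f : Sym2 V), x = y ∨ G.Adj x y)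

/-- The Gaifman graph with a set `S` of vertices removed (vertices of `S` become isolated). -/
def gaifMinus (E : Set (Set V)) (S : Set V) : SimpleGraph V :=
  SimpleGraph.fromRel (fun u v => (gaif E).Adj u v ∧ u ∉ S ∧ v ∉ S)

/-- `S` is an `(A, B)`-separator: `A ∩ B ⊆ S` and every walk from `A` to `B` meets `S`. -/
def IsSeparator (G : SimpleGraph V) (A B S : Set V) : Prop :=
  A ∩ B ⊆ S ∧ ∀ a ∈ A, ∀ b ∈ B, ∀ p : G.Walk a b, ∃ x ∈ p.support, x ∈ S

/-- Minors of clutters: obtained by repeated deletions and contractions. -/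
inductive IsMinor : Set (Set V) → Set (Set V) → Prop
  | refl (E : Set (Set V)) : IsMinor E E
  | delStep {F E : Set (Set V)} (v : V) : IsMinor F E → IsMinor (del F v) E
  | contrStep {F E : Set (Set V)} (v : V) : IsMinor F E → IsMinor (contr F v) E


/-- a graph containing an induced matching with `k` edges has at
least `2^k` maximal independent sets. -/
lemma exists_max_ext {V : Type} [Fintype V] (G : SimpleGraph V) (S : Set V)
    (hS : IndepSet G S) : ∃ M, MaxIndep G M ∧ S ⊆ M := by
  have hfin : {J : Set V | IndepSet G J ∧ S ⊆ J}.Finite := Set.toFinite _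
  obtain ⟨M, hM, hmax⟩ := Set.Finite.exists_maximalFor id _ hfin ⟨S, hS, subset_rfl⟩
  exact ⟨M, ⟨hM.1, fun J hJ hMJ => subset_antisymm (hmax ⟨hJ, hM.2.trans hMJ⟩ hMJ) hMJ⟩, hM.2⟩

theorem stmt_0 {V : Type} [Fintype V] (G : SimpleGraph V) (k : ℕ)
    (a b : Fin k → V) (h : IsInducedMatching G k a b) :
    2 ^ k ≤ {I : Set V | MaxIndep G I}.ncard := by
  classical
  set c : (Fin k → Bool) → Fin k → V := fun f i => if f i then a i else b i with hc
  have hcmem : ∀ f i, c f i ∈ ({a i, b i} : Set V) := by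
    intro f i; by_cases hfi : f i <;> simp [hc, hfi]
  have hindep : ∀ f, IndepSet G (Set.range (c f)) := by
    intro f
    rintro u ⟨i, rfl⟩ v ⟨j, rfl⟩ hne
    rcases eq_or_ne i j with rfl | hij
    · exact absurd rfl hne
    · exact (h.2 i j hij _ (hcmem f i) _ (hcmem f j)).2
  choose M hMmax hMsub using fun f => exists_max_ext G _ (hindep f)
  have hinj : Function.Injective M := by
    intro f g hfg
    funext i
    by_contra hne
    have ha : ∀ f' (i : Fin k), f' i = true → a i ∈ M f' :=
      fun f' i hfi => hMsub f' ⟨i, by simp [hc, hfi]⟩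
    have hb : ∀ f' (i : Fin k), f' i = false → b i ∈ M f' :=
      fun f' i hfi => hMsub f' ⟨i, by simp [hc, hfi]⟩
    have hab : a i ∈ M f ∧ b i ∈ M f := by
      cases hf : f i <;> cases hg : g i <;> simp_all
      · exact hfg ▸ hb f i hf
      · exact hfg ▸ ha f i hf
    exact (hMmax f).1 hab.1 hab.2 (h.1 i).ne (h.1 i)
  have hsub : Set.range M ⊆ {I : Set V | MaxIndep G I} := by
    rintro _ ⟨f, rfl⟩; exact hMmax f
  calc 2 ^ k = (Set.range M).ncard := by
        rw [← Set.image_univ, Set.ncard_image_of_injective _ hinj, Set.ncard_univ,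
          Nat.card_eq_fintype_card]
        simp
    _ ≤ _ := Set.ncard_le_ncard hsub (Set.toFinite _)
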